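/- Let Φ be a quaternion unit gain graph whose underlying graph is a tree T. Then the row left rank of the adjacency matrix A(Φ) equals the rank of the adjacency matrix A(T) of the underlying tree. -/

import Mathlib

/-- The row left rank of a quaternion matrix: the rank (dimension of the span, with
quaternion scalars acting on the left) of the set of rows of `A`. -/
noncomputable def rowLeftRank {m n : Type*} (A : Matrix m n (Quaternion ℝ)) : ℕ :=
  (Module.rank (Quaternion ℝ)
    (Submodule.span (Quaternion ℝ) (Set.range (fun i j => A i j)))).toNat

/-- The row right rank: scalars act on the right, i.e. over the opposite ring. -/
noncomputable def rowRightRank {m n : Type*} (A : Matrix m n (Quaternion ℝ)) : ℕ :=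
  (Module.rank (Quaternion ℝ)ᵐᵒᵖ
    (Submodule.span (Quaternion ℝ)ᵐᵒᵖ (Set.range (fun i j => A i j)))).toNat

/-- The column right rank: the span of the columns with scalars acting on the right. -/
noncomputable def colRightRank {m n : Type*} (A : Matrix m n (Quaternion ℝ)) : ℕ :=
  (Module.rank (Quaternion ℝ)ᵐᵒᵖ
    (Submodule.span (Quaternion ℝ)ᵐᵒᵖ (Set.range (fun j i => A i j)))).toNat

/-- A quaternion unit gain graph on vertex type `V`. -/
structure QuaternionUnitGainGraph (V : Type*) where
  G : SimpleGraph V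
  gain : V → V → Quaternion ℝ
  gain_unit : ∀ u v, G.Adj u v → ‖gain u v‖ = 1
  gain_inv : ∀ u v, G.Adj u v → gain v u = star (gain u v)
  gain_zero : ∀ u v, ¬ G.Adj u v → gain u v = 0

/-- The (Hermitian, quaternion) adjacency matrix of a quaternion unit gain graph. -/
def QuaternionUnitGainGraph.adjMatrix {V : Type*} (Φ : QuaternionUnitGainGraph V) :
    Matrix V V (Quaternion ℝ) := fun u v => Φ.gain u v

/-- The row left rank of a quaternion unit gain graph. -/
noncomputable def QuaternionUnitGainGraph.rank {V : Type*} (Φ : QuaternionUnitGainGraph V) : ℕ :=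
  rowLeftRank Φ.adjMatrix

namespace QGGaux

open Quaternion SimpleGraph

variable {V : Type*}

lemma unit_star_mul (q : Quaternion ℝ) (h : ‖q‖ = 1) : star q * q = 1 := by
  rw [Quaternion.star_mul_self]
  have : normSq q = 1 := by
    have := Quaternion.normSq_eq_norm_mul_self (a := q); rw [h] at this; simpa using this
  rw [this]; norm_num

lemma unit_mul_star (q : Quaternion ℝ) (h : ‖q‖ = 1) : q * star q = 1 := by
  rw [Quaternion.self_mul_star]
  have : normSq q = 1 := by
    have := Quaternion.normSq_eq_norm_mul_self (a := q); rw [h] at this; simpa using this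
  rw [this]; norm_num

/-- The gain of a walk: the ordered product of gains along its darts. -/
noncomputable def wgain (Φ : QuaternionUnitGainGraph V) {u v : V} (p : Φ.G.Walk u v) : Quaternion ℝ :=
  (p.darts.map fun d => Φ.gain d.toProd.1 d.toProd.2).prod

@[simp] lemma wgain_nil (Φ : QuaternionUnitGainGraph V) {u : V} :
    wgain Φ (Walk.nil : Φ.G.Walk u u) = 1 := by simp [wgain]

lemma wgain_cons (Φ : QuaternionUnitGainGraph V) {u v w : V} (h : Φ.G.Adj u v)
    (p : Φ.G.Walk v w) : wgain Φ (Walk.cons h p) = Φ.gain u v * wgain Φ p := by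
  simp [wgain, Walk.darts_cons]

lemma wgain_concat (Φ : QuaternionUnitGainGraph V) {u v w : V} (p : Φ.G.Walk u v)
    (h : Φ.G.Adj v w) : wgain Φ (p.concat h) = wgain Φ p * Φ.gain v w := by
  simp [wgain, Walk.darts_concat]

lemma norm_wgain (Φ : QuaternionUnitGainGraph V) {u v : V} (p : Φ.G.Walk u v) :
    ‖wgain Φ p‖ = 1 := by
  induction p with
  | nil => simp
  | cons h p ih =>
    rw [wgain_cons, norm_mul, ih, Φ.gain_unit _ _ h, mul_one]

/-- A path extended by an edge to a new vertex is a path. -/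
lemma isPath_concat {G : SimpleGraph V} {u v w : V} {p : G.Walk u v} (hp : p.IsPath)
    (h : G.Adj v w) (hw : w ∉ p.support) : (p.concat h).IsPath := by
  rw [← Walk.isPath_reverse_iff, Walk.reverse_concat, Walk.cons_isPath_iff]
  refine ⟨Walk.isPath_reverse_iff _ |>.mpr hp, ?_⟩
  rw [Walk.support_reverse, List.mem_reverse]; exact hw

/-- Switching: gains on a tree can be obtained from the trivial gain by a switching
function `ζ`. -/
lemma exists_switch [DecidableEq V] (Φ : QuaternionUnitGainGraph V) (hT : Φ.G.IsTree) :
    ∃ ζ : V → Quaternion ℝ, (∀ v, ‖ζ v‖ = 1) ∧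
      ∀ u v, Φ.G.Adj u v → Φ.gain u v = ζ u * star (ζ v) := by
  obtain ⟨root⟩ := hT.isConnected.nonempty
  choose p hpath hpuniq using hT.existsUnique_path
  refine ⟨fun v => star (wgain Φ (p root v)), fun v => by simp [norm_wgain], ?_⟩
  intro u v huv
  have key : wgain Φ (p root u) * Φ.gain u v = wgain Φ (p root v) := by
    by_cases hv : v ∈ (p root u).support
    · -- v is on the path to u: the path to v is its prefix, and p root u = (p root v).concat
      have htake : ((p root u).takeUntil v hv).IsPath := (hpath root u).takeUntil hv
      have hpv : (p root u).takeUntil v hv = p root v := hpuniq root v _ htake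
      have hu_not : u ∉ ((p root u).takeUntil v hv).support := by
        intro hu
        have hnd := (hpath root u).support_nodup
        rw [← Walk.take_spec (p root u) hv, Walk.support_append] at hnd
        have hu2 : u ∈ ((p root u).dropUntil v hv).support.tail := by
          have hend : u ∈ ((p root u).dropUntil v hv).support := Walk.end_mem_support _
          rw [Walk.support_eq_cons] at hend
          rcases List.mem_cons.mp hend with h' | h'
          · exact absurd h'.symm huv.ne'
          · exact h'
        exact (List.disjoint_of_nodup_append hnd) hu hu2
      have hconcat : (((p root u).takeUntil v hv).concat huv.symm).IsPath :=
        isPath_concat htake huv.symm hu_not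
      have heq : ((p root u).takeUntil v hv).concat huv.symm = p root u :=
        hpuniq root u _ hconcat
      have := wgain_concat Φ ((p root u).takeUntil v hv) huv.symm
      rw [heq, hpv] at this
      rw [this, Φ.gain_inv _ _ huv, mul_assoc,
        unit_star_mul _ (Φ.gain_unit _ _ huv), mul_one]
    · have hconcat : ((p root u).concat huv).IsPath := isPath_concat (hpath root u) huv hv
      have heq : (p root u).concat huv = p root v := hpuniq root v _ hconcat
      rw [← heq, wgain_concat]
  calc Φ.gain u v
      = star (wgain Φ (p root u)) * (wgain Φ (p root u) * Φ.gain u v) := by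
        rw [← mul_assoc, unit_star_mul _ (norm_wgain Φ _), one_mul]
    _ = star (wgain Φ (p root u)) * star (star (wgain Φ (p root v))) := by
        rw [key, star_star]



namespace LinAlg

open Submodule Set Module

variable {V : Type*}

/-- Componentwise coercion `(V → ℝ) → (V → ℍ)` as an `ℝ`-linear map. -/
noncomputable def Lmap (V : Type*) : (V → ℝ) →ₗ[ℝ] (V → Quaternion ℝ) :=
  (Algebra.linearMap ℝ (Quaternion ℝ)).compLeft V

@[simp] lemma Lmap_apply (x : V → ℝ) (v : V) : Lmap V x v = (x v : Quaternion ℝ) := rfl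

/-- Right multiplication by a fixed quaternion, as a left-linear map. -/
noncomputable def rmul (q : Quaternion ℝ) : Quaternion ℝ →ₗ[Quaternion ℝ] Quaternion ℝ where
  toFun x := x * q
  map_add' _ _ := add_mul _ _ _
  map_smul' c x := by simp [smul_eq_mul, mul_assoc]

/-- Right multiplication by a nonzero quaternion, as a left-linear equivalence. -/
noncomputable def rmulEquiv (q : Quaternion ℝ) (hq : q ≠ 0) :
    Quaternion ℝ ≃ₗ[Quaternion ℝ] Quaternion ℝ :=
  LinearEquiv.ofLinear (rmul q) (rmul q⁻¹)
    (LinearMap.ext fun x => by simp [rmul, mul_assoc, inv_mul_cancel₀ hq])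
    (LinearMap.ext fun x => by simp [rmul, mul_assoc, mul_inv_cancel₀ hq])

@[simp] lemma rmulEquiv_apply (q : Quaternion ℝ) (hq : q ≠ 0) (x : Quaternion ℝ) :
    rmulEquiv q hq x = x * q := rfl

lemma span_unit_smul_eq {ι M : Type*} [AddCommGroup M] [Module (Quaternion ℝ) M]
    (c : ι → Quaternion ℝ) (hc : ∀ i, c i ≠ 0) (w : ι → M) :
    span (Quaternion ℝ) (range fun i => c i • w i) = span (Quaternion ℝ) (range w) := by
  apply le_antisymm <;> rw [span_le] <;> rintro x ⟨i, rfl⟩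
  · exact Submodule.smul_mem _ _ (subset_span ⟨i, rfl⟩)
  · have : w i = (c i)⁻¹ • (c i • w i) := by
      rw [smul_smul, inv_mul_cancel₀ (hc i), one_smul]
    rw [this]
    exact Submodule.smul_mem _ _ (subset_span ⟨i, rfl⟩)

/-- The key real-to-quaternion rank comparison: the left `ℍ`-rank of the span of a family
of coerced real vectors equals the `ℝ`-rank of their real span. -/
lemma rank_span_coe [Fintype V] {ι : Type*} [Fintype ι] (w : ι → (V → ℝ)) :
    Module.rank (Quaternion ℝ) (span (Quaternion ℝ) (range fun i => Lmap V (w i)))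
      = (finrank ℝ (span ℝ (range w)) : Cardinal) := by
  classical
  set W := span ℝ (range w) with hW
  set r := finrank ℝ W with hr
  let b : Basis (Fin r) ℝ W := Module.finBasis ℝ W
  let cb : Fin r → (V → ℝ) := fun i => (b i : V → ℝ)
  have hWspan : W = span ℝ (range cb) := by
    conv_lhs => rw [← Submodule.map_subtype_top W, ← b.span_eq]
    rw [Submodule.map_span, ← Set.range_comp]
    rfl
  -- the two ℍ-spans coincide
  have hspan_eq : span (Quaternion ℝ) (range fun i => Lmap V (w i))
      = span (Quaternion ℝ) (range fun i => Lmap V (cb i)) := by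
    apply le_antisymm <;> rw [span_le] <;> rintro x ⟨i, rfl⟩
    · have h1 : w i ∈ W := subset_span ⟨i, rfl⟩
      rw [hWspan] at h1
      have h2 : Lmap V (w i) ∈ span ℝ (range fun i => Lmap V (cb i)) := by
        have := Submodule.image_span_subset_span (Lmap V) (range cb) ⟨w i, h1, rfl⟩
        rwa [← Set.range_comp] at this
      exact Submodule.span_le_restrictScalars ℝ (Quaternion ℝ) _ h2
    · have h1 : cb i ∈ W := by rw [hWspan]; exact subset_span ⟨i, rfl⟩
      rw [hW] at h1
      have h2 : Lmap V (cb i) ∈ span ℝ (range fun i => Lmap V (w i)) := by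
        have := Submodule.image_span_subset_span (Lmap V) (range w) ⟨cb i, h1, rfl⟩
        rwa [← Set.range_comp] at this
      exact Submodule.span_le_restrictScalars ℝ (Quaternion ℝ) _ h2
  have hcb_li : LinearIndependent ℝ cb :=
    b.linearIndependent.map' W.subtype W.ker_subtype
  have hli : LinearIndependent (Quaternion ℝ) (fun i => Lmap V (cb i)) := by
    rw [Fintype.linearIndependent_iff]
    intro g hg
    have hgv : ∀ v : V, ∑ i, cb i v • g i = 0 := by
      intro v
      have := congr_fun hg v
      simp only [Finset.sum_apply, Pi.smul_apply, Lmap_apply, smul_eq_mul,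
        Quaternion.mul_coe_eq_smul, Pi.zero_apply] at this
      exact this
    have hfcomp : ∀ (f : Quaternion ℝ →ₗ[ℝ] ℝ) (i : ι → Fin r) , True := fun _ _ => trivial
    have key : ∀ (f : Quaternion ℝ →ₗ[ℝ] ℝ) (i : Fin r), f (g i) = 0 := by
      intro f
      apply Fintype.linearIndependent_iff.mp hcb_li (fun j => f (g j))
      funext v
      have := congr_arg f (hgv v)
      simp only [map_sum, map_smul, map_zero, smul_eq_mul] at this
      simpa [Finset.sum_apply, mul_comm] using this
    intro i
    apply Quaternion.ext
    · exact key (QuaternionAlgebra.reₗ _ _ _) i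
    · exact key (QuaternionAlgebra.imIₗ _ _ _) i
    · exact key (QuaternionAlgebra.imJₗ _ _ _) i
    · exact key (QuaternionAlgebra.imKₗ _ _ _) i
  rw [hspan_eq, rank_span hli]
  have h := Cardinal.mk_range_eq_of_injective hli.injective
  simp only [Cardinal.mk_fintype, Fintype.card_fin, Cardinal.lift_natCast,
    Nat.cast_inj] at h
  rw [Cardinal.mk_fintype, h]

end LinAlg

end QGGaux


open QGGaux QGGaux.LinAlg Submodule Set

/-- For a quaternion unit gain graph whose underlying graph is a tree, the row left
rank of its adjacency matrix equals the rank of the adjacency matrix of the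
underlying tree. -/
theorem gainTree_rank_eq_tree_rank {V : Type*} [Fintype V] [DecidableEq V]
    (Φ : QuaternionUnitGainGraph V) [DecidableRel Φ.G.Adj] (hT : Φ.G.IsTree) :
    Φ.rank = (Φ.G.adjMatrix ℝ).rank := by
  classical
  obtain ⟨ζ, hζnorm, hζ⟩ := QGGaux.exists_switch Φ hT
  set B := Φ.G.adjMatrix ℝ with hB
  have hζne : ∀ v, ζ v ≠ 0 := by
    intro v h
    have := hζnorm v
    rw [h, norm_zero] at this
    norm_num at this
  let F : (V → Quaternion ℝ) ≃ₗ[Quaternion ℝ] (V → Quaternion ℝ) :=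
    LinearEquiv.piCongrRight fun v => rmulEquiv (star (ζ v)) (star_ne_zero.mpr (hζne v))
  have hrow : (fun u (v : V) => Φ.adjMatrix u v)
      = fun u => ζ u • F (Lmap V (B u)) := by
    funext u v
    by_cases h : Φ.G.Adj u v
    · simp [QuaternionUnitGainGraph.adjMatrix, F, hζ u v h, h, hB, smul_eq_mul]
    · simp [QuaternionUnitGainGraph.adjMatrix, F, Φ.gain_zero u v h, h, hB]
  have hspan1 : span (Quaternion ℝ) (range (fun u (v : V) => Φ.adjMatrix u v))
      = Submodule.map (F : (V → Quaternion ℝ) →ₗ[Quaternion ℝ] (V → Quaternion ℝ))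
          (span (Quaternion ℝ) (range fun u => Lmap V (B u))) := by
    rw [hrow, span_unit_smul_eq ζ hζne, ← Submodule.span_image]
    congr 1
    rw [← Set.range_comp]
    rfl
  have hrank1 : Module.rank (Quaternion ℝ)
      (span (Quaternion ℝ) (range (fun u (v : V) => Φ.adjMatrix u v)))
      = Module.rank (Quaternion ℝ) (span (Quaternion ℝ) (range fun u => Lmap V (B u))) := by
    rw [hspan1]
    exact (LinearEquiv.rank_eq (F.submoduleMap _)).symm
  have hrank2 := rank_span_coe (w := fun u => B u)
  rw [QuaternionUnitGainGraph.rank, rowLeftRank, hrank1, hrank2, Cardinal.toNat_natCast,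
    Matrix.rank_eq_finrank_span_row]
  rfl
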